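/- (Energy estimate.) Let s ∈ (1/2,1] and σ ∈ (1/s,2). There exists a constant C ≥ 1 depending only on s and σ such that the following holds. Let ν > 0, α > 0, 0 < β < ν²/2, φ(t) := α + βt, let T₀ ≤ T and let W : [T₀,T] → ℝ be continuous with φ(t) − νW(t) ≥ 0 on [T₀,T]. Suppose u : [T₀,T] → (ℤ² → ℂ) satisfies u(t)(0) = 0, each coefficient t ↦ u(t)(k) is differentiable on [T₀,T] with d/dt u(t)(k) = −(ν²/2)|k|^{2s} u(t)(k) − B_{νW(t)}(u(t),u(t))(k) for every k ≠ 0, the map t ↦ ‖u(t)‖_{σs, φ(t)} is continuous, and sup_{t∈[T₀,T]} ‖u(t)‖_{(σ+1)s, φ(t)} < ∞. If C·‖u(T₀)‖_{σs, φ(T₀)} ≤ ν²/2 − β, then for all t ∈ [T₀,T]: ‖u(t)‖_{σs, φ(t)} ≤ ‖u(T₀)‖_{σs, φ(T₀)}. -/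

import Mathlib

open scoped ENNReal NNReal
open MeasureTheory

noncomputable section

/-- Euclidean norm of a lattice point `k ∈ ℤ² ⊆ ℝ²`. -/
def znorm (k : ℤ × ℤ) : ℝ := Real.sqrt ((k.1 : ℝ) ^ 2 + (k.2 : ℝ) ^ 2)

/-- `j^⊥ · k` where `j^⊥ = (−j₂, j₁)`. -/
def perpDot (j k : ℤ × ℤ) : ℝ := (-(j.2 : ℝ)) * (k.1 : ℝ) + (j.1 : ℝ) * (k.2 : ℝ)

/-- Gevrey norm `‖a‖_{ρ,φ} = (∑_{k≠0} |k|^{2ρ} e^{2φ|k|^s} |a k|²)^{1/2}`, valued in `ℝ≥0∞`. -/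
def gnorm (s ρ φ : ℝ) (a : ℤ × ℤ → ℂ) : ℝ≥0∞ :=
  (∑' k : ℤ × ℤ, if k = 0 then 0 else
    ENNReal.ofReal (znorm k ^ (2 * ρ) * Real.exp (2 * φ * znorm k ^ s) * ‖a k‖ ^ 2)) ^ (1/2 : ℝ)

/-- Fourier coefficients of the twisted SQG nonlinearity `B_w(a,b)`:
`B_w(a,b)(k) = i ∑_{j≠0, j≠k} ((j^⊥·k)/|j|) e^{−w(|k|^s−|j|^s−|k−j|^s)} a(j) b(k−j)`. -/
def Bcoef (s w : ℝ) (a b : ℤ × ℤ → ℂ) (k : ℤ × ℤ) : ℂ :=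
  Complex.I * ∑' j : ℤ × ℤ, if j = 0 ∨ j = k then 0 else
    ((perpDot j k / znorm j : ℝ) : ℂ) *
      ((Real.exp (-w * (znorm k ^ s - znorm j ^ s - znorm (k - j) ^ s)) : ℝ) : ℂ) *
      a j * b (k - j)

/-! ### Basic facts about `znorm` -/

lemma znorm_nonneg (k : ℤ × ℤ) : 0 ≤ znorm k := Real.sqrt_nonneg _

lemma znorm_sq (k : ℤ × ℤ) : znorm k ^ 2 = (k.1 : ℝ) ^ 2 + (k.2 : ℝ) ^ 2 :=
  Real.sq_sqrt (by positivity)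

lemma one_le_znorm {k : ℤ × ℤ} (hk : k ≠ 0) : 1 ≤ znorm k := by
  rw [show (1:ℝ) = Real.sqrt 1 by simp]
  apply Real.sqrt_le_sqrt
  have h1 : k.1 ≠ 0 ∨ k.2 ≠ 0 := by
    by_contra h; push_neg at h; exact hk (Prod.ext h.1 h.2)
  rcases h1 with h1 | h1
  · have h2 : (1:ℤ) ≤ k.1^2 := by
      rcases lt_or_gt_of_ne h1 with h | h <;> nlinarith
    have : (1:ℝ) ≤ (k.1:ℝ)^2 := by exact_mod_cast h2
    nlinarith [sq_nonneg (k.2 : ℝ)]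
  · have h2 : (1:ℤ) ≤ k.2^2 := by
      rcases lt_or_gt_of_ne h1 with h | h <;> nlinarith
    have : (1:ℝ) ≤ (k.2:ℝ)^2 := by exact_mod_cast h2
    nlinarith [sq_nonneg (k.1 : ℝ)]

lemma znorm_pos {k : ℤ × ℤ} (hk : k ≠ 0) : 0 < znorm k := lt_of_lt_of_le one_pos (one_le_znorm hk)

lemma sqrt_tri (a b c d : ℝ) :
    Real.sqrt ((a+c)^2 + (b+d)^2) ≤ Real.sqrt (a^2+b^2) + Real.sqrt (c^2+d^2) := by
  have h1 : a*c + b*d ≤ Real.sqrt (a^2+b^2) * Real.sqrt (c^2+d^2) := by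
    rw [← Real.sqrt_mul (by positivity)]
    calc a*c+b*d ≤ |a*c+b*d| := le_abs_self _
    _ ≤ Real.sqrt ((a*c+b*d)^2) := by rw [Real.sqrt_sq_eq_abs]
    _ ≤ _ := Real.sqrt_le_sqrt (by nlinarith [sq_nonneg (a*d - b*c)])
  have e1 := Real.sq_sqrt (by positivity : (0:ℝ) ≤ a^2+b^2)
  have e2 := Real.sq_sqrt (by positivity : (0:ℝ) ≤ c^2+d^2)
  have h2 : (a+c)^2 + (b+d)^2 ≤ (Real.sqrt (a^2+b^2) + Real.sqrt (c^2+d^2))^2 := by nlinarith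
  calc Real.sqrt ((a+c)^2 + (b+d)^2)
      ≤ Real.sqrt ((Real.sqrt (a^2+b^2) + Real.sqrt (c^2+d^2))^2) := Real.sqrt_le_sqrt h2
  _ = _ := Real.sqrt_sq (by positivity)

lemma znorm_triangle (j l : ℤ × ℤ) : znorm (j + l) ≤ znorm j + znorm l := by
  have := sqrt_tri (j.1:ℝ) (j.2:ℝ) (l.1:ℝ) (l.2:ℝ)
  simpa [znorm, Prod.fst_add, Prod.snd_add, Int.cast_add] using this

lemma abs_perpDot_le (j k : ℤ × ℤ) : |perpDot j k| ≤ znorm j * znorm k := by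
  rw [← Real.sqrt_sq_eq_abs, znorm, znorm, ← Real.sqrt_mul (by positivity)]
  exact Real.sqrt_le_sqrt
    (by unfold perpDot; nlinarith [sq_nonneg ((j.1:ℝ)*(k.1:ℝ) + (j.2:ℝ)*(k.2:ℝ))])

/-! ### Lattice summability -/

lemma summable_one_add_abs {p : ℝ} (hp : 1 < p) :
    Summable (fun m : ℤ => (1 + |(m:ℝ)|) ^ (-p)) := by
  have hnat : Summable (fun n : ℕ => (1 + (n:ℝ)) ^ (-p)) := by
    have h0 : Summable (fun n : ℕ => ((n:ℝ)) ^ (-p)) := by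
      rw [Real.summable_nat_rpow]; linarith
    have := h0.comp_injective (add_right_injective 1)
    refine this.congr fun n => ?_
    simp only [Function.comp_apply]
    push_cast
    rw [add_comm]
  apply Summable.of_nat_of_neg
  · refine hnat.congr fun n => by
      rw [Int.cast_natCast, abs_of_nonneg (by positivity : (0:ℝ) ≤ (n:ℝ))]
  · refine hnat.congr fun n => by
      push_cast
      rw [abs_neg, abs_of_nonneg (by positivity : (0:ℝ) ≤ (n:ℝ))]

lemma lattice_sum_lt_top {p : ℝ} (hp : 1 < p) :
    (∑' j : ℤ × ℤ, if j = 0 then 0 else ENNReal.ofReal (znorm j ^ (-(2*p)))) < ⊤ := by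
  have key : ∀ j : ℤ × ℤ, (if j = 0 then 0 else ENNReal.ofReal (znorm j ^ (-(2*p)))) ≤
      ENNReal.ofReal ((4:ℝ) ^ p) *
        (ENNReal.ofReal ((1 + |(j.1:ℝ)|) ^ (-p)) * ENNReal.ofReal ((1 + |(j.2:ℝ)|) ^ (-p))) := by
    intro j
    by_cases hj : j = 0
    · simp [hj]
    simp only [hj, if_false]
    rw [← ENNReal.ofReal_mul (by positivity), ← ENNReal.ofReal_mul (by positivity)]
    apply ENNReal.ofReal_le_ofReal
    have hcomp : (1 + |(j.1:ℝ)|) * (1 + |(j.2:ℝ)|) ≤ 4 * znorm j ^ 2 := by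
      rw [znorm_sq]
      have h1 : j.1 ≠ 0 ∨ j.2 ≠ 0 := by
        by_contra h; push_neg at h; exact hj (Prod.ext h.1 h.2)
      have ha : (0:ℝ) ≤ |(j.1:ℝ)| := abs_nonneg _
      have hb : (0:ℝ) ≤ |(j.2:ℝ)| := abs_nonneg _
      have ha2 : |(j.1:ℝ)|^2 = (j.1:ℝ)^2 := sq_abs _
      have hb2 : |(j.2:ℝ)|^2 = (j.2:ℝ)^2 := sq_abs _
      have hone : 1 ≤ |(j.1:ℝ)| ∨ 1 ≤ |(j.2:ℝ)| := by
        rcases h1 with h | h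
        · left; rw [← Int.cast_abs]; exact_mod_cast Int.one_le_abs (by simpa using h)
        · right; rw [← Int.cast_abs]; exact_mod_cast Int.one_le_abs (by simpa using h)
      rcases hone with h | h <;>
        nlinarith [sq_nonneg (|(j.1:ℝ)| - 1), sq_nonneg (|(j.2:ℝ)| - 1),
          sq_nonneg (|(j.1:ℝ)| - |(j.2:ℝ)|)]
    have e1 : (znorm j ^ 2) ^ (-p) = znorm j ^ (-(2*p)) := by
      rw [← Real.rpow_natCast_mul (znorm_nonneg j)]
      norm_num
    rw [← e1]
    calc (znorm j ^ 2) ^ (-p) ≤ (((1 + |(j.1:ℝ)|) * (1 + |(j.2:ℝ)|))/4) ^ (-p) := by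
          apply Real.rpow_le_rpow_of_nonpos (by positivity) (by linarith) (by linarith)
    _ = (4:ℝ)^p * ((1 + |(j.1:ℝ)|) ^ (-p) * (1 + |(j.2:ℝ)|) ^ (-p)) := by
        rw [Real.div_rpow (by positivity) (by norm_num),
          Real.mul_rpow (by positivity) (by positivity),
          Real.rpow_neg (by norm_num : (0:ℝ) ≤ 4), div_inv_eq_mul]
        ring
  calc (∑' j : ℤ × ℤ, if j = 0 then 0 else ENNReal.ofReal (znorm j ^ (-(2*p))))
      ≤ ∑' j : ℤ × ℤ, ENNReal.ofReal ((4:ℝ) ^ p) *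
        (ENNReal.ofReal ((1 + |(j.1:ℝ)|) ^ (-p)) * ENNReal.ofReal ((1 + |(j.2:ℝ)|) ^ (-p))) :=
        ENNReal.tsum_le_tsum key
  _ = ENNReal.ofReal ((4:ℝ)^p) * ((∑' m : ℤ, ENNReal.ofReal ((1 + |(m:ℝ)|) ^ (-p))) *
        (∑' m : ℤ, ENNReal.ofReal ((1 + |(m:ℝ)|) ^ (-p)))) := by
      rw [ENNReal.tsum_mul_left]
      congr 1
      rw [ENNReal.tsum_prod (f := fun m n : ℤ =>
        ENNReal.ofReal ((1 + |(m:ℝ)|) ^ (-p)) * ENNReal.ofReal ((1 + |(n:ℝ)|) ^ (-p)))]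
      simp_rw [ENNReal.tsum_mul_left, ENNReal.tsum_mul_right]
  _ < ⊤ := by
      have hfin : (∑' m : ℤ, ENNReal.ofReal ((1 + |(m:ℝ)|) ^ (-p))) < ⊤ := by
        rw [← ENNReal.ofReal_tsum_of_nonneg (fun m => by positivity) (summable_one_add_abs hp)]
        exact ENNReal.ofReal_lt_top
      exact ENNReal.mul_lt_top ENNReal.ofReal_lt_top (ENNReal.mul_lt_top hfin hfin)

/-! ### ℓ²-type inequalities in `ℝ≥0∞` -/

lemma ecs (f g : ℤ × ℤ → ℝ≥0∞) :
    ∑' k, f k * g k ≤ (∑' k, f k ^ 2) ^ (1/2 : ℝ) * (∑' k, g k ^ 2) ^ (1/2 : ℝ) := by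
  have hconj : Real.HolderConjugate 2 2 := Real.HolderConjugate.two_two
  have := ENNReal.lintegral_mul_le_Lp_mul_Lq (Measure.count : Measure (ℤ × ℤ)) hconj
    (f := f) (g := g) (.of_discrete) (.of_discrete)
  simpa [lintegral_count, ENNReal.rpow_two] using this

lemma halfmul (x : ℝ≥0∞) : x ^ (1/2 : ℝ) * x ^ (1/2 : ℝ) = x := by
  rw [← ENNReal.rpow_add_of_nonneg _ _ (by norm_num) (by norm_num)]
  norm_num

lemma sq_half (x : ℝ≥0∞) : (x ^ (1/2 : ℝ)) ^ 2 = x := by rw [sq, halfmul]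

lemma half_sq (x : ℝ≥0∞) : (x ^ 2) ^ (1/2 : ℝ) = x := by
  rw [← ENNReal.rpow_natCast x 2, ← ENNReal.rpow_mul]
  norm_num

lemma tsum_translate (g : ℤ × ℤ → ℝ≥0∞) (k : ℤ × ℤ) : ∑' j, g (k - j) = ∑' j, g j :=
  (Equiv.subLeft k).tsum_eq g

lemma tsum_translate' (g : ℤ × ℤ → ℝ≥0∞) (j : ℤ × ℤ) : ∑' k, g (k - j) = ∑' k, g k :=
  (Equiv.subRight j).tsum_eq g

lemma conv_sq (f g : ℤ × ℤ → ℝ≥0∞) :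
    ∑' k, (∑' j, f j * g (k - j)) ^ 2 ≤ (∑' j, f j ^ 2) * (∑' j, g j) ^ 2 := by
  have hk : ∀ k, (∑' j, f j * g (k - j)) ^ 2 ≤ (∑' j, f j ^ 2 * g (k - j)) * (∑' j, g j) := by
    intro k
    have h1 : ∑' j, f j * g (k - j) ≤
        (∑' j, (f j * (g (k - j)) ^ (1/2:ℝ)) ^ 2) ^ (1/2:ℝ) *
          (∑' j, ((g (k - j)) ^ (1/2:ℝ)) ^ 2) ^ (1/2:ℝ) := by
      have := ecs (fun j => f j * (g (k - j)) ^ (1/2:ℝ)) (fun j => (g (k - j)) ^ (1/2:ℝ))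
      refine le_trans (le_of_eq ?_) this
      congr 1; funext j
      rw [mul_assoc, halfmul]
    have h2 : ∀ j, (f j * (g (k - j)) ^ (1/2:ℝ)) ^ 2 = f j ^ 2 * g (k - j) := by
      intro j; rw [mul_pow, sq_half]
    have h3 : ∀ j : ℤ × ℤ, ((g (k - j)) ^ (1/2:ℝ)) ^ 2 = g (k - j) := fun j => sq_half _
    simp_rw [h2, h3] at h1
    rw [tsum_translate g k] at h1
    calc (∑' j, f j * g (k - j)) ^ 2
        ≤ ((∑' j, f j ^ 2 * g (k - j)) ^ (1/2:ℝ) * (∑' j, g j) ^ (1/2:ℝ)) ^ 2 :=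
          pow_le_pow_left' h1 2
    _ = (∑' j, f j ^ 2 * g (k - j)) * (∑' j, g j) := by rw [mul_pow, sq_half, sq_half]
  calc ∑' k, (∑' j, f j * g (k - j)) ^ 2
      ≤ ∑' k, (∑' j, f j ^ 2 * g (k - j)) * (∑' j, g j) := ENNReal.tsum_le_tsum hk
  _ = (∑' k, ∑' j, f j ^ 2 * g (k - j)) * (∑' j, g j) := ENNReal.tsum_mul_right
  _ = (∑' j, ∑' k, f j ^ 2 * g (k - j)) * (∑' j, g j) := by rw [ENNReal.tsum_comm]
  _ = (∑' j, f j ^ 2 * ∑' k, g (k - j)) * (∑' j, g j) := by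
        congr 1; exact tsum_congr fun j => ENNReal.tsum_mul_left
  _ = (∑' j, f j ^ 2) * (∑' j, g j) ^ 2 := by
        simp_rw [tsum_translate']
        rw [ENNReal.tsum_mul_right, sq]
        ring

lemma real_rpow_subadd {x y s : ℝ} (hx : 0 ≤ x) (hy : 0 ≤ y) (hs0 : 0 ≤ s) (hs1 : s ≤ 1) :
    (x + y) ^ s ≤ x ^ s + y ^ s := by
  have h := NNReal.rpow_add_le_add_rpow x.toNNReal y.toNNReal hs0 hs1
  have hc : ((x.toNNReal + y.toNNReal : ℝ≥0) : ℝ) = x + y := by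
    simp [Real.coe_toNNReal _ hx, Real.coe_toNNReal _ hy]
  calc (x + y) ^ s = (((x.toNNReal + y.toNNReal : ℝ≥0) : ℝ)) ^ s := by rw [hc]
  _ = (((x.toNNReal + y.toNNReal) ^ s : ℝ≥0) : ℝ) := by rw [NNReal.coe_rpow]
  _ ≤ ((x.toNNReal ^ s + y.toNNReal ^ s : ℝ≥0) : ℝ) := by exact_mod_cast h
  _ = x ^ s + y ^ s := by
      push_cast [NNReal.coe_rpow]
      rw [Real.coe_toNNReal _ hx, Real.coe_toNNReal _ hy]

lemma rpow_split {x y z p : ℝ} (hx : 0 ≤ x) (hy : 0 ≤ y) (hz : 0 ≤ z)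
    (hxyz : x ≤ y + z) (hp : 0 ≤ p) : x ^ p ≤ 2 ^ p * (y ^ p + z ^ p) := by
  have hmax : x ≤ 2 * max y z := by
    rcases le_total y z with h | h
    · calc x ≤ y + z := hxyz
      _ ≤ 2 * max y z := by rw [two_mul]; gcongr <;> simp [h]
    · calc x ≤ y + z := hxyz
      _ ≤ 2 * max y z := by rw [two_mul]; gcongr <;> simp [h]
  calc x ^ p ≤ (2 * max y z) ^ p := Real.rpow_le_rpow hx hmax hp
  _ = 2 ^ p * (max y z) ^ p := Real.mul_rpow (by norm_num) (le_max_iff.2 (Or.inl hy))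
  _ ≤ 2 ^ p * (y ^ p + z ^ p) := by
      gcongr
      rcases max_cases y z with ⟨h1, _⟩ | ⟨h1, _⟩
      · rw [h1]; nlinarith [Real.rpow_nonneg hz p]
      · rw [h1]; nlinarith [Real.rpow_nonneg hy p]

lemma enn_norm_tsum_le {ι : Type*} [Countable ι] (f : ι → ℂ) :
    (‖∑' i, f i‖₊ : ℝ≥0∞) ≤ ∑' i, (‖f i‖₊ : ℝ≥0∞) := by
  by_cases h : (∑' i, (‖f i‖₊ : ℝ≥0∞)) = ⊤
  · simp [h]
  · have hsum : Summable (fun i => ‖f i‖₊) := ENNReal.tsum_coe_ne_top_iff_summable.mp h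
    have hf : Summable f := by
      apply Summable.of_nnnorm hsum
    rw [← ENNReal.coe_tsum hsum]
    exact_mod_cast nnnorm_tsum_le hsum

/-! ### Weighted sequences -/

lemma ofReal_norm_eq_coe_nnnorm {E : Type*} [SeminormedAddGroup E] (x : E) :
    ENNReal.ofReal ‖x‖ = (‖x‖₊ : ℝ≥0∞) := ENNReal.ofReal_eq_coe_nnreal _

lemma zr_nonneg (k : ℤ × ℤ) (r : ℝ) : 0 ≤ znorm k ^ r :=
  Real.rpow_nonneg (znorm_nonneg k) r

def Ew (s φ : ℝ) (k : ℤ × ℤ) : ℝ≥0∞ := ENNReal.ofReal (Real.exp (φ * znorm k ^ s))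

def wfun (s ρ φ : ℝ) (a : ℤ × ℤ → ℂ) (k : ℤ × ℤ) : ℝ≥0∞ :=
  if k = 0 then 0 else ENNReal.ofReal (znorm k ^ ρ) * Ew s φ k * (‖a k‖₊ : ℝ≥0∞)

def Gfun (s φ : ℝ) (a : ℤ × ℤ → ℂ) (k : ℤ × ℤ) : ℝ≥0∞ :=
  if k = 0 then 0 else Ew s φ k * (‖a k‖₊ : ℝ≥0∞)

lemma wfun_eq_ofReal (s ρ φ : ℝ) (a : ℤ × ℤ → ℂ) {k : ℤ × ℤ} (hk : k ≠ 0) :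
    wfun s ρ φ a k = ENNReal.ofReal (znorm k ^ ρ * Real.exp (φ * znorm k ^ s) * ‖a k‖) := by
  rw [wfun, if_neg hk,
    ENNReal.ofReal_mul (mul_nonneg (zr_nonneg k ρ) (Real.exp_pos _).le),
    ENNReal.ofReal_mul (zr_nonneg k ρ), ofReal_norm_eq_coe_nnnorm]
  rfl

lemma Gfun_eq_ofReal (s φ : ℝ) (a : ℤ × ℤ → ℂ) {k : ℤ × ℤ} (hk : k ≠ 0) :
    Gfun s φ a k = ENNReal.ofReal (Real.exp (φ * znorm k ^ s) * ‖a k‖) := by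
  rw [Gfun, if_neg hk, ENNReal.ofReal_mul (by positivity), ofReal_norm_eq_coe_nnnorm]
  rfl

lemma gnorm_eq (s ρ φ : ℝ) (a : ℤ × ℤ → ℂ) :
    gnorm s ρ φ a = (∑' k, (wfun s ρ φ a k) ^ 2) ^ (1/2 : ℝ) := by
  unfold gnorm
  congr 1
  apply tsum_congr
  intro k
  by_cases hk : k = 0
  · simp [hk, wfun]
  · rw [if_neg hk, wfun_eq_ofReal s ρ φ a hk,
      ← ENNReal.ofReal_pow (mul_nonneg (mul_nonneg (zr_nonneg k ρ) (Real.exp_pos _).le)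
        (norm_nonneg _))]
    congr 1
    have h1 : znorm k ^ (2 * ρ) = (znorm k ^ ρ) ^ 2 := by
      rw [sq, ← Real.rpow_add (znorm_pos hk)]
      congr 1
      ring
    have h2 : Real.exp (2 * φ * znorm k ^ s) = (Real.exp (φ * znorm k ^ s)) ^ 2 := by
      rw [← Real.exp_nat_mul]
      ring_nf
    rw [h1, h2]; ring

lemma gnorm_sq (s ρ φ : ℝ) (a : ℤ × ℤ → ℂ) :
    gnorm s ρ φ a ^ 2 = ∑' k, (wfun s ρ φ a k) ^ 2 := by
  rw [gnorm_eq, sq_half]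

/-- The master nonlinear estimate. -/
theorem NL_bound (s σ : ℝ) (hs2 : 1/2 ≤ s) (hs1 : s ≤ 1) (hσs : 1 < σ * s) (hσ1 : 1 ≤ σ) :
    ∃ c : ℝ≥0∞, c ≠ ⊤ ∧ ∀ (φ w : ℝ), w ≤ φ → ∀ a : ℤ × ℤ → ℂ,
      (∑' k, if k = 0 then 0 else ENNReal.ofReal (znorm k ^ (2*(σ*s)) *
          Real.exp (2*φ*znorm k ^ s) * (‖a k‖ * ‖Bcoef s w a a k‖)))
        ≤ c * gnorm s (σ*s) φ a * gnorm s ((σ+1)*s) φ a ^ 2 := by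
  have hs0 : 0 < s := by linarith
  set p : ℝ := (σ - 1) * s + 1 with hp_def
  have hp0 : 0 ≤ p := by nlinarith
  have hpσ : p ≤ (σ + 1) * s := by nlinarith
  have hσm1 : 0 ≤ (σ - 1) * s := by nlinarith
  set L : ℝ≥0∞ := ∑' j : ℤ × ℤ, if j = 0 then 0 else ENNReal.ofReal (znorm j ^ (-(2*(σ*s))))
    with hL_def
  have hL : L < ⊤ := lattice_sum_lt_top hσs
  refine ⟨ENNReal.ofReal (2 ^ p) * 2 * L ^ (1/2:ℝ), ?_, ?_⟩
  · exact ENNReal.mul_ne_top (ENNReal.mul_ne_top ENNReal.ofReal_ne_top (by norm_num))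
      (ENNReal.rpow_ne_top_of_nonneg (by norm_num) hL.ne)
  intro φ w hφw a
  set Bf := wfun s ((σ+1)*s) φ a with hBf_def
  set Gf := Gfun s φ a with hGf_def
  set R : ℤ × ℤ → ℝ≥0∞ := fun k =>
    if k = 0 then 0 else ENNReal.ofReal (znorm k ^ ((σ-1)*s)) * Ew s φ k *
      (‖Bcoef s w a a k‖₊ : ℝ≥0∞) with hR_def
  -- Step 1: summand factorization and Cauchy–Schwarz
  have step1 : (∑' k, if k = 0 then 0 else ENNReal.ofReal (znorm k ^ (2*(σ*s)) *
      Real.exp (2*φ*znorm k ^ s) * (‖a k‖ * ‖Bcoef s w a a k‖)))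
      ≤ (∑' k, Bf k ^ 2) ^ (1/2:ℝ) * (∑' k, R k ^ 2) ^ (1/2:ℝ) := by
    refine le_trans (le_of_eq (tsum_congr fun k => ?_)) (ecs Bf R)
    by_cases hk : k = 0
    · simp [hk, hBf_def, wfun, hR_def]
    · rw [if_neg hk, hBf_def, wfun_eq_ofReal s _ φ a hk, hR_def]
      simp only [if_neg hk]
      rw [← ofReal_norm_eq_coe_nnnorm, Ew,
        ← ENNReal.ofReal_mul (zr_nonneg k ((σ-1)*s)),
        ← ENNReal.ofReal_mul (mul_nonneg (zr_nonneg k ((σ-1)*s)) (Real.exp_pos _).le),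
        ← ENNReal.ofReal_mul (mul_nonneg (mul_nonneg (zr_nonneg k ((σ+1)*s))
            (Real.exp_pos _).le) (norm_nonneg _))]
      congr 1
      have h1 : znorm k ^ (2*(σ*s)) = znorm k ^ ((σ+1)*s) * znorm k ^ ((σ-1)*s) := by
        rw [← Real.rpow_add (znorm_pos hk)]
        ring_nf
      have h2 : Real.exp (2*φ*znorm k ^ s) =
          Real.exp (φ * znorm k ^ s) * Real.exp (φ * znorm k ^ s) := by
        rw [← Real.exp_add]; ring_nf
      rw [h1, h2]; ring
  -- Step 2: pointwise bound on R
  have step2 : ∀ k, R k ≤ ENNReal.ofReal (2 ^ p) * 2 * ∑' j, Bf j * Gf (k - j) := by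
    intro k
    by_cases hk : k = 0
    · simp [hR_def, hk]
    rw [hR_def]
    simp only [if_neg hk]
    have hBle : (‖Bcoef s w a a k‖₊ : ℝ≥0∞) ≤
        ∑' j, (‖(if j = 0 ∨ j = k then (0:ℂ) else
          ((perpDot j k / znorm j : ℝ) : ℂ) *
            ((Real.exp (-w * (znorm k ^ s - znorm j ^ s - znorm (k - j) ^ s)) : ℝ) : ℂ) *
            a j * a (k - j))‖₊ : ℝ≥0∞) := by
      rw [Bcoef]
      calc (‖Complex.I * (∑' j : ℤ × ℤ, if j = 0 ∨ j = k then (0:ℂ) else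
            ((perpDot j k / znorm j : ℝ) : ℂ) *
              ((Real.exp (-w * (znorm k ^ s - znorm j ^ s - znorm (k - j) ^ s)) : ℝ) : ℂ) *
              a j * a (k - j))‖₊ : ℝ≥0∞)
          = (‖(∑' j : ℤ × ℤ, if j = 0 ∨ j = k then (0:ℂ) else
            ((perpDot j k / znorm j : ℝ) : ℂ) *
              ((Real.exp (-w * (znorm k ^ s - znorm j ^ s - znorm (k - j) ^ s)) : ℝ) : ℂ) *
              a j * a (k - j))‖₊ : ℝ≥0∞) := by
            rw [nnnorm_mul, Complex.nnnorm_I, one_mul]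
      _ ≤ _ := enn_norm_tsum_le _
    calc ENNReal.ofReal (znorm k ^ ((σ-1)*s)) * Ew s φ k * (‖Bcoef s w a a k‖₊ : ℝ≥0∞)
        ≤ ENNReal.ofReal (znorm k ^ ((σ-1)*s)) * Ew s φ k *
          ∑' j, (‖(if j = 0 ∨ j = k then (0:ℂ) else
            ((perpDot j k / znorm j : ℝ) : ℂ) *
              ((Real.exp (-w * (znorm k ^ s - znorm j ^ s - znorm (k - j) ^ s)) : ℝ) : ℂ) *
              a j * a (k - j))‖₊ : ℝ≥0∞) := by gcongr
    _ = ∑' j, ENNReal.ofReal (znorm k ^ ((σ-1)*s)) * Ew s φ k *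
          (‖(if j = 0 ∨ j = k then (0:ℂ) else
            ((perpDot j k / znorm j : ℝ) : ℂ) *
              ((Real.exp (-w * (znorm k ^ s - znorm j ^ s - znorm (k - j) ^ s)) : ℝ) : ℂ) *
              a j * a (k - j))‖₊ : ℝ≥0∞) := by
          rw [ENNReal.tsum_mul_left]
    _ ≤ ∑' j, ENNReal.ofReal (2 ^ p) * (Bf j * Gf (k - j) + Gf j * Bf (k - j)) := by
          apply ENNReal.tsum_le_tsum
          intro j
          by_cases hj : j = 0 ∨ j = k
          · simp [hj]
          push_neg at hj
          obtain ⟨hj0, hjk⟩ := hj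
          have hkj0 : k - j ≠ 0 := fun h => hjk (sub_eq_zero.mp h).symm
          simp only [if_neg (not_or.mpr ⟨hj0, hjk⟩)]
          set zk := znorm k with hzk
          set zj := znorm j with hzj
          set zkj := znorm (k - j) with hzkj
          have hzk1 : 1 ≤ zk := one_le_znorm hk
          have hzj1 : 1 ≤ zj := one_le_znorm hj0
          have hzkj1 : 1 ≤ zkj := one_le_znorm hkj0
          have hzkpos : 0 < zk := by linarith
          have hzjpos : 0 < zj := by linarith
          have hzkjpos : 0 < zkj := by linarith
          have hnorm : ‖((perpDot j k / zj : ℝ) : ℂ) *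
              ((Real.exp (-w * (zk ^ s - zj ^ s - zkj ^ s)) : ℝ) : ℂ) *
              a j * a (k - j)‖ = |perpDot j k / zj| *
              Real.exp (-w * (zk ^ s - zj ^ s - zkj ^ s)) * ‖a j‖ * ‖a (k - j)‖ := by
            rw [norm_mul, norm_mul, norm_mul, Complex.norm_real, Complex.norm_real,
              Real.norm_eq_abs, Real.norm_eq_abs, abs_of_pos (Real.exp_pos _)]
          rw [← ofReal_norm_eq_coe_nnnorm, hnorm, Ew,
            ← ENNReal.ofReal_mul (zr_nonneg k ((σ-1)*s)),
            ← ENNReal.ofReal_mul (mul_nonneg (zr_nonneg k ((σ-1)*s)) (Real.exp_pos _).le)]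
          have hBfGf1 : Bf j * Gf (k - j) = ENNReal.ofReal
              ((zj ^ ((σ+1)*s) * Real.exp (φ * zj ^ s) * ‖a j‖) *
                (Real.exp (φ * zkj ^ s) * ‖a (k - j)‖)) := by
            rw [hBf_def, wfun_eq_ofReal s _ φ a hj0, hGf_def, Gfun_eq_ofReal s φ a hkj0,
              ← ENNReal.ofReal_mul (mul_nonneg (mul_nonneg (zr_nonneg j ((σ+1)*s))
                (Real.exp_pos _).le) (norm_nonneg _))]
          have hBfGf2 : Gf j * Bf (k - j) = ENNReal.ofReal
              ((Real.exp (φ * zj ^ s) * ‖a j‖) *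
                (zkj ^ ((σ+1)*s) * Real.exp (φ * zkj ^ s) * ‖a (k - j)‖)) := by
            rw [hBf_def, wfun_eq_ofReal s _ φ a hkj0, hGf_def, Gfun_eq_ofReal s φ a hj0,
              ← ENNReal.ofReal_mul (mul_nonneg (Real.exp_pos _).le (norm_nonneg _))]
          rw [hBfGf1, hBfGf2,
            ← ENNReal.ofReal_add
              (mul_nonneg (mul_nonneg (mul_nonneg (zr_nonneg j ((σ+1)*s)) (Real.exp_pos _).le)
                (norm_nonneg _)) (mul_nonneg (Real.exp_pos _).le (norm_nonneg _)))
              (mul_nonneg (mul_nonneg (Real.exp_pos _).le (norm_nonneg _))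
                (mul_nonneg (mul_nonneg (zr_nonneg (k-j) ((σ+1)*s)) (Real.exp_pos _).le)
                  (norm_nonneg _))),
            ← ENNReal.ofReal_mul (by positivity)]
          apply ENNReal.ofReal_le_ofReal
          have hpd : |perpDot j k / zj| ≤ zk := by
            rw [abs_div, abs_of_pos hzjpos, div_le_iff₀ hzjpos]
            calc |perpDot j k| ≤ zj * zk := abs_perpDot_le j k
            _ = zk * zj := by ring
          have htri : zk ≤ zj + zkj := by
            have hh : j + (k - j) = k := by ring
            calc zk = znorm (j + (k - j)) := by rw [hh]
            _ ≤ zj + zkj := znorm_triangle j (k - j)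
          have hsub : zk ^ s ≤ zj ^ s + zkj ^ s := by
            calc zk ^ s ≤ (zj + zkj) ^ s :=
                  Real.rpow_le_rpow (znorm_nonneg k) htri (le_of_lt hs0)
            _ ≤ zj ^ s + zkj ^ s := real_rpow_subadd (znorm_nonneg j) (znorm_nonneg (k-j))
                  (le_of_lt hs0) hs1
          have hexp : Real.exp (φ * zk ^ s) * Real.exp (-w * (zk ^ s - zj ^ s - zkj ^ s)) ≤
              Real.exp (φ * zj ^ s) * Real.exp (φ * zkj ^ s) := by
            rw [← Real.exp_add, ← Real.exp_add]
            apply Real.exp_le_exp.mpr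
            nlinarith [hsub, hφw]
          have hzkp : zk ^ ((σ-1)*s) * zk = zk ^ p := by
            rw [hp_def, Real.rpow_add_one (ne_of_gt hzkpos)]
          have hsplit : zk ^ p ≤ 2 ^ p * (zj ^ ((σ+1)*s) + zkj ^ ((σ+1)*s)) := by
            calc zk ^ p ≤ 2 ^ p * (zj ^ p + zkj ^ p) :=
                  rpow_split (znorm_nonneg k) (znorm_nonneg j) (znorm_nonneg (k-j)) htri hp0
            _ ≤ 2 ^ p * (zj ^ ((σ+1)*s) + zkj ^ ((σ+1)*s)) :=
                  mul_le_mul_of_nonneg_left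
                    (add_le_add (Real.rpow_le_rpow_of_exponent_le hzj1 hpσ)
                      (Real.rpow_le_rpow_of_exponent_le hzkj1 hpσ))
                    (Real.rpow_nonneg (by norm_num) p)
          have e1 : (zk ^ ((σ-1)*s) * |perpDot j k / zj|) *
              ((Real.exp (φ * zk ^ s) * Real.exp (-w * (zk ^ s - zj ^ s - zkj ^ s))) *
                (‖a j‖ * ‖a (k - j)‖))
              ≤ (zk ^ ((σ-1)*s) * zk) *
                ((Real.exp (φ * zj ^ s) * Real.exp (φ * zkj ^ s)) * (‖a j‖ * ‖a (k - j)‖)) := by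
            have hb1 : zk ^ ((σ-1)*s) * |perpDot j k / zj| ≤ zk ^ ((σ-1)*s) * zk :=
              mul_le_mul_of_nonneg_left hpd (zr_nonneg k ((σ-1)*s))
            apply mul_le_mul hb1 _ (by positivity)
              (mul_nonneg (zr_nonneg k ((σ-1)*s)) (znorm_nonneg k))
            exact mul_le_mul_of_nonneg_right hexp (by positivity)
          calc zk ^ ((σ-1)*s) * Real.exp (φ * zk ^ s) *
              (|perpDot j k / zj| * Real.exp (-w * (zk ^ s - zj ^ s - zkj ^ s)) * ‖a j‖ *
                ‖a (k - j)‖)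
              = (zk ^ ((σ-1)*s) * |perpDot j k / zj|) *
                ((Real.exp (φ * zk ^ s) * Real.exp (-w * (zk ^ s - zj ^ s - zkj ^ s))) *
                  (‖a j‖ * ‖a (k - j)‖)) := by ring
          _ ≤ (zk ^ ((σ-1)*s) * zk) *
                ((Real.exp (φ * zj ^ s) * Real.exp (φ * zkj ^ s)) * (‖a j‖ * ‖a (k - j)‖)) := e1
          _ = zk ^ p * ((Real.exp (φ * zj ^ s) * Real.exp (φ * zkj ^ s)) *
                (‖a j‖ * ‖a (k - j)‖)) := by rw [hzkp]
          _ ≤ (2 ^ p * (zj ^ ((σ+1)*s) + zkj ^ ((σ+1)*s))) *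
                ((Real.exp (φ * zj ^ s) * Real.exp (φ * zkj ^ s)) * (‖a j‖ * ‖a (k - j)‖)) :=
              mul_le_mul_of_nonneg_right hsplit (by positivity)
          _ = 2 ^ p * (zj ^ ((σ+1)*s) * Real.exp (φ * zj ^ s) * ‖a j‖ *
                (Real.exp (φ * zkj ^ s) * ‖a (k - j)‖) +
                Real.exp (φ * zj ^ s) * ‖a j‖ *
                (zkj ^ ((σ+1)*s) * Real.exp (φ * zkj ^ s) * ‖a (k - j)‖)) := by ring
    _ = ENNReal.ofReal (2 ^ p) * ((∑' j, Bf j * Gf (k - j)) + ∑' j, Gf j * Bf (k - j)) := by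
          rw [← ENNReal.tsum_add, ENNReal.tsum_mul_left]
    _ = ENNReal.ofReal (2 ^ p) * 2 * ∑' j, Bf j * Gf (k - j) := by
          have hsym : ∑' j, Gf j * Bf (k - j) = ∑' j, Bf j * Gf (k - j) := by
            rw [← (Equiv.subLeft k).tsum_eq (fun j => Gf j * Bf (k - j))]
            apply tsum_congr
            intro j
            simp only [Equiv.subLeft_apply, sub_sub_cancel]
            ring
          rw [hsym]
          ring
  -- Step 3: ℓ² bound on R via Young's inequality
  have step3 : (∑' k, R k ^ 2) ^ (1/2:ℝ) ≤ ENNReal.ofReal (2 ^ p) * 2 *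
      ((∑' k, Bf k ^ 2) ^ (1/2:ℝ) * ∑' k, Gf k) := by
    have h1 : ∑' k, R k ^ 2 ≤ (ENNReal.ofReal (2 ^ p) * 2) ^ 2 *
        ((∑' k, Bf k ^ 2) * (∑' k, Gf k) ^ 2) := by
      calc ∑' k, R k ^ 2 ≤ ∑' k, (ENNReal.ofReal (2 ^ p) * 2 * ∑' j, Bf j * Gf (k - j)) ^ 2 := by
            apply ENNReal.tsum_le_tsum
            intro k
            exact pow_le_pow_left' (step2 k) 2
      _ = (ENNReal.ofReal (2 ^ p) * 2) ^ 2 * ∑' k, (∑' j, Bf j * Gf (k - j)) ^ 2 := by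
            rw [← ENNReal.tsum_mul_left]
            apply tsum_congr; intro k; rw [mul_pow]
      _ ≤ (ENNReal.ofReal (2 ^ p) * 2) ^ 2 * ((∑' k, Bf k ^ 2) * (∑' k, Gf k) ^ 2) := by
            gcongr
            exact conv_sq Bf Gf
    calc (∑' k, R k ^ 2) ^ (1/2:ℝ)
        ≤ ((ENNReal.ofReal (2 ^ p) * 2) ^ 2 * ((∑' k, Bf k ^ 2) * (∑' k, Gf k) ^ 2)) ^ (1/2:ℝ) :=
          ENNReal.rpow_le_rpow h1 (by norm_num)
    _ = ENNReal.ofReal (2 ^ p) * 2 * ((∑' k, Bf k ^ 2) ^ (1/2:ℝ) * ∑' k, Gf k) := by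
        rw [ENNReal.mul_rpow_of_nonneg _ _ (by norm_num),
          ENNReal.mul_rpow_of_nonneg _ _ (by norm_num), half_sq, half_sq]
  -- Step 4: ℓ¹ bound on G
  have step4 : (∑' k, Gf k) ≤ L ^ (1/2:ℝ) * (∑' k, (wfun s (σ*s) φ a k) ^ 2) ^ (1/2:ℝ) := by
    have hpt : ∀ k, Gf k = (if k = 0 then 0 else ENNReal.ofReal (znorm k ^ (-(σ*s)))) *
        wfun s (σ*s) φ a k := by
      intro k
      by_cases hk : k = 0
      · simp [hk, hGf_def, Gfun]
      · rw [hGf_def, Gfun_eq_ofReal s φ a hk, if_neg hk, wfun_eq_ofReal s _ φ a hk,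
          ← ENNReal.ofReal_mul (zr_nonneg k (-(σ*s)))]
        congr 1
        have h1 : znorm k ^ (-(σ*s)) * znorm k ^ (σ*s) = 1 := by
          rw [← Real.rpow_add (znorm_pos hk)]
          norm_num
        linear_combination (-(Real.exp (φ * znorm k ^ s) * ‖a k‖)) * h1
    calc (∑' k, Gf k) = ∑' k, (if k = 0 then 0 else ENNReal.ofReal (znorm k ^ (-(σ*s)))) *
          wfun s (σ*s) φ a k := tsum_congr hpt
    _ ≤ (∑' k, ((if k = 0 then 0 else ENNReal.ofReal (znorm k ^ (-(σ*s))))) ^ 2) ^ (1/2:ℝ) *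
          (∑' k, (wfun s (σ*s) φ a k) ^ 2) ^ (1/2:ℝ) := ecs _ _
    _ ≤ L ^ (1/2:ℝ) * (∑' k, (wfun s (σ*s) φ a k) ^ 2) ^ (1/2:ℝ) := by
        have hle : (∑' k, ((if k = 0 then 0 else ENNReal.ofReal (znorm k ^ (-(σ*s))))) ^ 2) ≤ L := by
          rw [hL_def]
          apply ENNReal.tsum_le_tsum
          intro k
          by_cases hk : k = 0
          · simp [hk]
          · simp only [if_neg hk]
            rw [← ENNReal.ofReal_pow (zr_nonneg k (-(σ*s)))]
            apply ENNReal.ofReal_le_ofReal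
            rw [sq, ← Real.rpow_add (znorm_pos hk)]
            apply le_of_eq
            congr 1
            ring
        exact mul_le_mul' (ENNReal.rpow_le_rpow hle (by norm_num)) le_rfl
  -- final assembly
  calc (∑' k, if k = 0 then 0 else ENNReal.ofReal (znorm k ^ (2*(σ*s)) *
      Real.exp (2*φ*znorm k ^ s) * (‖a k‖ * ‖Bcoef s w a a k‖)))
      ≤ (∑' k, Bf k ^ 2) ^ (1/2:ℝ) * (∑' k, R k ^ 2) ^ (1/2:ℝ) := step1
  _ ≤ (∑' k, Bf k ^ 2) ^ (1/2:ℝ) * (ENNReal.ofReal (2 ^ p) * 2 *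
        ((∑' k, Bf k ^ 2) ^ (1/2:ℝ) * ∑' k, Gf k)) := by gcongr
  _ ≤ (∑' k, Bf k ^ 2) ^ (1/2:ℝ) * (ENNReal.ofReal (2 ^ p) * 2 *
        ((∑' k, Bf k ^ 2) ^ (1/2:ℝ) *
          (L ^ (1/2:ℝ) * (∑' k, (wfun s (σ*s) φ a k) ^ 2) ^ (1/2:ℝ)))) := by gcongr
  _ = ENNReal.ofReal (2 ^ p) * 2 * L ^ (1/2:ℝ) *
        (∑' k, (wfun s (σ*s) φ a k) ^ 2) ^ (1/2:ℝ) *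
        ((∑' k, Bf k ^ 2) ^ (1/2:ℝ) * (∑' k, Bf k ^ 2) ^ (1/2:ℝ)) := by ring
  _ = ENNReal.ofReal (2 ^ p) * 2 * L ^ (1/2:ℝ) * gnorm s (σ*s) φ a *
        gnorm s ((σ+1)*s) φ a ^ 2 := by
      rw [halfmul, ← gnorm_eq s (σ*s) φ a, hBf_def, ← gnorm_sq s ((σ+1)*s) φ a]

/-! ### Time derivative of a single weighted Fourier mode -/

lemma norm_sq_eq (z : ℂ) : ‖z‖^2 = z.re^2 + z.im^2 := by
  rw [Complex.sq_norm, Complex.normSq_apply]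
  ring

lemma re_conj_mul_le (z B : ℂ) : |z.re * B.re + z.im * B.im| ≤ ‖z‖ * ‖B‖ := by
  have h1 : z.re * B.re + z.im * B.im = ((starRingEnd ℂ) z * B).re := by
    simp only [Complex.mul_re, Complex.conj_re, Complex.conj_im]
    ring
  rw [h1]
  calc |((starRingEnd ℂ) z * B).re| ≤ ‖(starRingEnd ℂ) z * B‖ := Complex.abs_re_le_norm _
  _ = ‖z‖ * ‖B‖ := by rw [norm_mul, RCLike.norm_conj]

/-- Derivative and bound for one weighted mode. -/
lemma mode_deriv (s σ ν α β T₀ T : ℝ) (W : ℝ → ℝ) (u : ℝ → ℤ × ℤ → ℂ)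
    (hs0 : 0 < s) (hβ : 0 ≤ β) (hν2β : 2*β ≤ ν^2)
    (hderiv : ∀ t ∈ Set.Icc T₀ T, ∀ k : ℤ × ℤ, k ≠ 0 →
      HasDerivWithinAt (fun τ => u τ k)
        (((-(ν ^ 2 / 2) * znorm k ^ (2 * s) : ℝ) : ℂ) * u t k
          - Bcoef s (ν * W t) (u t) (u t) k) (Set.Icc T₀ T) t)
    (t : ℝ) (ht : t ∈ Set.Icc T₀ T) (k : ℤ × ℤ) :
    ∃ D : ℝ, HasDerivWithinAt (fun τ => if k = 0 then 0 else
        znorm k ^ (2*(σ*s)) * Real.exp (2*(α+β*τ)*znorm k ^ s) * ‖u τ k‖^2) D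
        (Set.Icc T₀ T) t ∧
      D ≤ (2*β - ν^2) * (if k = 0 then 0 else
            znorm k ^ (2*((σ+1)*s)) * Real.exp (2*(α+β*t)*znorm k ^ s) * ‖u t k‖^2)
          + 2 * (if k = 0 then 0 else
            znorm k ^ (2*(σ*s)) * Real.exp (2*(α+β*t)*znorm k ^ s) *
              (‖u t k‖ * ‖Bcoef s (ν*W t) (u t) (u t) k‖)) := by
  by_cases hk : k = 0
  · refine ⟨0, ?_, ?_⟩
    · simp only [hk, if_pos rfl]
      exact hasDerivWithinAt_const t _ 0
    · simp [hk]
  -- nonzero mode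
  simp only [if_neg hk]
  set c1 : ℝ := znorm k ^ (2*(σ*s)) with hc1
  set c2 : ℝ := znorm k ^ s with hc2
  set z : ℂ := u t k with hz
  set B : ℂ := Bcoef s (ν*W t) (u t) (u t) k with hB
  set d : ℂ := ((-(ν ^ 2 / 2) * znorm k ^ (2 * s) : ℝ) : ℂ) * u t k - B with hd
  have hU : HasDerivWithinAt (fun τ => u τ k) d (Set.Icc T₀ T) t := hderiv t ht k hk
  have hre : HasDerivWithinAt (fun τ => (u τ k).re) d.re (Set.Icc T₀ T) t :=
    (Complex.reCLM.hasFDerivAt).comp_hasDerivWithinAt t hU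
  have him : HasDerivWithinAt (fun τ => (u τ k).im) d.im (Set.Icc T₀ T) t :=
    (Complex.imCLM.hasFDerivAt).comp_hasDerivWithinAt t hU
  have hq : HasDerivWithinAt (fun τ => (u τ k).re^2 + (u τ k).im^2)
      ((2:ℕ) * (u t k).re^1 * d.re + (2:ℕ) * (u t k).im^1 * d.im) (Set.Icc T₀ T) t :=
    (hre.pow 2).add (him.pow 2)
  have hlin : HasDerivWithinAt (fun τ : ℝ => 2*(α+β*τ)*c2) (2*β*c2) (Set.Icc T₀ T) t := by
    have h0 : HasDerivWithinAt (fun τ : ℝ => τ) 1 (Set.Icc T₀ T) t :=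
      hasDerivWithinAt_id t _
    have h1 := (((h0.const_mul β).const_add α).const_mul 2).mul_const c2
    simpa using h1
  have hE : HasDerivWithinAt (fun τ => Real.exp (2*(α+β*τ)*c2))
      (Real.exp (2*(α+β*t)*c2) * (2*β*c2)) (Set.Icc T₀ T) t := hlin.exp
  have hprod := (hE.mul hq).const_mul c1
  have heq : (fun τ => znorm k ^ (2*(σ*s)) * Real.exp (2*(α+β*τ)*znorm k ^ s) * ‖u τ k‖^2)
      = (fun τ => c1 * (Real.exp (2*(α+β*τ)*c2) * ((u τ k).re^2 + (u τ k).im^2))) := by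
    funext τ
    rw [norm_sq_eq]
    ring
  rw [heq]
  refine ⟨_, hprod, ?_⟩
  -- now the bound
  set Et : ℝ := Real.exp (2*(α+β*t)*c2) with hEt
  have hEtpos : 0 < Et := Real.exp_pos _
  have hQ : (u t k).re^2 + (u t k).im^2 = ‖z‖^2 := (norm_sq_eq z).symm
  have hc2' : c2 ≤ znorm k ^ (2*s) :=
    Real.rpow_le_rpow_of_exponent_le (one_le_znorm hk) (by linarith)
  have hdre : (2:ℕ) * (u t k).re^1 * d.re + (2:ℕ) * (u t k).im^1 * d.im
      ≤ -(ν^2) * znorm k ^ (2*s) * ‖z‖^2 + 2 * (‖z‖ * ‖B‖) := by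
    have hdr : d.re = (-(ν ^ 2 / 2) * znorm k ^ (2 * s)) * z.re - B.re := by
      rw [hd, Complex.sub_re, Complex.re_ofReal_mul]
    have hdi : d.im = (-(ν ^ 2 / 2) * znorm k ^ (2 * s)) * z.im - B.im := by
      rw [hd, Complex.sub_im, Complex.im_ofReal_mul]
    have habs := re_conj_mul_le z B
    have h2 : -(z.re * B.re + z.im * B.im) ≤ ‖z‖ * ‖B‖ := by
      cases abs_le.mp habs with
      | intro hl hr => linarith
    rw [hdr, hdi, ← hQ]
    push_cast
    nlinarith [h2]
  have hQnn : (0:ℝ) ≤ ‖z‖^2 := by positivity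
  have hc1nn : 0 ≤ c1 := zr_nonneg k _
  have hc1z : c1 * znorm k ^ (2*s) = znorm k ^ (2*((σ+1)*s)) := by
    rw [hc1, ← Real.rpow_add (znorm_pos hk)]
    congr 1
    ring
  calc c1 * (Et * (2*β*c2) * ((u t k).re^2 + (u t k).im^2)
        + Et * ((2:ℕ) * (u t k).re^1 * d.re + (2:ℕ) * (u t k).im^1 * d.im))
      ≤ c1 * (Et * (2*β*znorm k ^ (2*s)) * ‖z‖^2
        + Et * (-(ν^2) * znorm k ^ (2*s) * ‖z‖^2 + 2 * (‖z‖ * ‖B‖))) := by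
        apply mul_le_mul_of_nonneg_left _ hc1nn
        apply add_le_add
        · rw [hQ]
          apply mul_le_mul_of_nonneg_right _ hQnn
          apply mul_le_mul_of_nonneg_left _ hEtpos.le
          apply mul_le_mul_of_nonneg_left hc2' (by linarith)
        · exact mul_le_mul_of_nonneg_left hdre hEtpos.le
  _ = (2*β - ν^2) * ((c1 * znorm k ^ (2*s)) * Et * ‖z‖^2) + 2 * (c1 * Et * (‖z‖ * ‖B‖)) := by
        ring
  _ = (2*β - ν^2) * (znorm k ^ (2*((σ+1)*s)) * Et * ‖z‖^2) + 2 * (c1 * Et * (‖z‖ * ‖B‖)) := by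
        rw [hc1z]
  _ ≤ (2*β - ν^2) * (znorm k ^ (2*((σ+1)*s)) * Real.exp (2*(α+β*t)*znorm k ^ s) * ‖u t k‖^2)
      + 2 * (znorm k ^ (2*(σ*s)) * Real.exp (2*(α+β*t)*znorm k ^ s) *
        (‖u t k‖ * ‖Bcoef s (ν*W t) (u t) (u t) k‖)) := by
        apply le_of_eq
        rw [hEt, hc1, hz, hB]

/-! ### Density functions and the energy decay step -/

def rdens (s ρ α β : ℝ) (u : ℝ → ℤ × ℤ → ℂ) (τ : ℝ) (k : ℤ × ℤ) : ℝ :=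
  if k = 0 then 0 else znorm k ^ (2*ρ) * Real.exp (2*(α+β*τ)*znorm k ^ s) * ‖u τ k‖^2

def nldens (s σ α β ν : ℝ) (W : ℝ → ℝ) (u : ℝ → ℤ × ℤ → ℂ) (τ : ℝ) (k : ℤ × ℤ) : ℝ :=
  if k = 0 then 0 else znorm k ^ (2*(σ*s)) * Real.exp (2*(α+β*τ)*znorm k ^ s) *
    (‖u τ k‖ * ‖Bcoef s (ν*W τ) (u τ) (u τ) k‖)

lemma rdens_nonneg (s ρ α β : ℝ) (u : ℝ → ℤ × ℤ → ℂ) (τ : ℝ) (k : ℤ × ℤ) :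
    0 ≤ rdens s ρ α β u τ k := by
  unfold rdens
  by_cases hk : k = 0
  · simp [hk]
  · simp only [if_neg hk]
    exact mul_nonneg (mul_nonneg (zr_nonneg k _) (Real.exp_pos _).le) (by positivity)

lemma nldens_nonneg (s σ α β ν : ℝ) (W : ℝ → ℝ) (u : ℝ → ℤ × ℤ → ℂ) (τ : ℝ) (k : ℤ × ℤ) :
    0 ≤ nldens s σ α β ν W u τ k := by
  unfold nldens
  by_cases hk : k = 0
  · simp [hk]
  · simp only [if_neg hk]
    exact mul_nonneg (mul_nonneg (zr_nonneg k _) (Real.exp_pos _).le) (by positivity)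

lemma gnorm_sq_eq_tsum (s ρ α β : ℝ) (u : ℝ → ℤ × ℤ → ℂ) (τ : ℝ) :
    gnorm s ρ (α+β*τ) (u τ) ^ 2 = ∑' k, ENNReal.ofReal (rdens s ρ α β u τ k) := by
  rw [gnorm, sq_half]
  apply tsum_congr
  intro k
  by_cases hk : k = 0
  · simp [hk, rdens]
  · simp only [if_neg hk, rdens]

lemma rdens_le_rdens (s σ α β : ℝ) (u : ℝ → ℤ × ℤ → ℂ) (τ : ℝ) (k : ℤ × ℤ)
    (hs0 : 0 ≤ s) (hσ : 0 ≤ σ) :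
    rdens s (σ*s) α β u τ k ≤ rdens s ((σ+1)*s) α β u τ k := by
  unfold rdens
  by_cases hk : k = 0
  · simp [hk]
  · simp only [if_neg hk]
    apply mul_le_mul_of_nonneg_right _ (by positivity)
    apply mul_le_mul_of_nonneg_right _ (Real.exp_pos _).le
    apply Real.rpow_le_rpow_of_exponent_le (one_le_znorm hk)
    nlinarith

lemma rdens_contOn (s ρ α β T₀ T : ℝ) (u : ℝ → ℤ × ℤ → ℂ) (k : ℤ × ℤ)
    (hcu : k ≠ 0 → ContinuousOn (fun τ => u τ k) (Set.Icc T₀ T)) :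
    ContinuousOn (fun τ => rdens s ρ α β u τ k) (Set.Icc T₀ T) := by
  unfold rdens
  by_cases hk : k = 0
  · simp only [if_pos hk]
    exact continuousOn_const
  · simp only [if_neg hk]
    have hE : Continuous fun τ : ℝ => znorm k ^ (2*ρ) *
        Real.exp (2*(α+β*τ)*znorm k ^ s) := by
      apply continuous_const.mul
      exact Real.continuous_exp.comp (by continuity)
    exact (hE.continuousOn).mul (((hcu hk).norm).pow 2)

/-- The core decay step: if the norm is small on `[T₀, t₂]`, the energy decays. -/
lemma decay_step (s σ : ℝ) (hs : s ∈ Set.Ioc (1/2 : ℝ) 1) (hσ : σ ∈ Set.Ioo (1/s) 2)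
    (c : ℝ≥0∞) (hc : c ≠ ⊤)
    (hcb : ∀ (φ w : ℝ), w ≤ φ → ∀ a : ℤ × ℤ → ℂ,
      (∑' k, if k = 0 then 0 else ENNReal.ofReal (znorm k ^ (2*(σ*s)) *
          Real.exp (2*φ*znorm k ^ s) * (‖a k‖ * ‖Bcoef s w a a k‖)))
        ≤ c * gnorm s (σ*s) φ a * gnorm s ((σ+1)*s) φ a ^ 2)
    (ν α β T₀ T : ℝ) (hν : 0 < ν) (hβ : 0 < β) (hβν : β < ν ^ 2 / 2) (hT : T₀ ≤ T)
    (W : ℝ → ℝ)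
    (hW : ∀ t ∈ Set.Icc T₀ T, 0 ≤ (α + β * t) - ν * W t)
    (u : ℝ → ℤ × ℤ → ℂ)
    (hderiv : ∀ t ∈ Set.Icc T₀ T, ∀ k : ℤ × ℤ, k ≠ 0 →
      HasDerivWithinAt (fun τ => u τ k)
        (((-(ν ^ 2 / 2) * znorm k ^ (2 * s) : ℝ) : ℂ) * u t k
          - Bcoef s (ν * W t) (u t) (u t) k) (Set.Icc T₀ T) t)
    (M : ℝ≥0∞) (hM : M ≠ ⊤)
    (hsup : ∀ t ∈ Set.Icc T₀ T, gnorm s ((σ+1)*s) (α + β * t) (u t) ^ 2 ≤ M)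
    (t₂ : ℝ) (ht₂ : t₂ ∈ Set.Icc T₀ T)
    (hsmall : ∀ τ ∈ Set.Icc T₀ t₂,
      2 * c * gnorm s (σ*s) (α + β * τ) (u τ) ≤ ENNReal.ofReal (ν ^ 2 - 2*β)) :
    gnorm s (σ*s) (α + β * t₂) (u t₂) ≤ gnorm s (σ*s) (α + β * T₀) (u T₀) := by
  rcases eq_or_lt_of_le ht₂.1 with heq | hlt
  · rw [← heq]
  have hs0 : 0 < s := lt_trans (by norm_num) hs.1
  have hσ1 : 1 ≤ σ := by
    have h1 : (1:ℝ) ≤ 1/s := by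
      rw [le_div_iff₀ hs0]
      nlinarith [hs.2]
    linarith [hσ.1]
  have hσs : 1 < σ * s := by
    have := hσ.1
    rw [div_lt_iff₀ hs0] at this
    linarith [this]
  have hpos : (0:ℝ) < ν ^ 2 - 2*β := by nlinarith
  -- abbreviations
  set Xg : ℝ → ℝ≥0∞ := fun τ => gnorm s (σ*s) (α + β * τ) (u τ) with hXg
  set Yg : ℝ → ℝ≥0∞ := fun τ => gnorm s ((σ+1)*s) (α + β * τ) (u τ) with hYg
  set r : ℝ → ℤ × ℤ → ℝ := rdens s (σ*s) α β u with hr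
  set y : ℝ → ℤ × ℤ → ℝ := rdens s ((σ+1)*s) α β u with hy
  have hXsq : ∀ τ, Xg τ ^ 2 = ∑' k, ENNReal.ofReal (r τ k) :=
    fun τ => gnorm_sq_eq_tsum s (σ*s) α β u τ
  have hYsq : ∀ τ, Yg τ ^ 2 = ∑' k, ENNReal.ofReal (y τ k) :=
    fun τ => gnorm_sq_eq_tsum s ((σ+1)*s) α β u τ
  have hXleY : ∀ τ, Xg τ ^ 2 ≤ Yg τ ^ 2 := by
    intro τ
    rw [hXsq, hYsq]
    exact ENNReal.tsum_le_tsum fun k => ENNReal.ofReal_le_ofReal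
      (rdens_le_rdens s σ α β u τ k hs0.le (by linarith))
  have hYfin : ∀ τ ∈ Set.Icc T₀ T, Yg τ ^ 2 ≠ ⊤ :=
    fun τ hτ => (lt_of_le_of_lt (hsup τ hτ) (lt_top_iff_ne_top.mpr hM)).ne
  have hXfin : ∀ τ ∈ Set.Icc T₀ T, Xg τ ^ 2 ≠ ⊤ :=
    fun τ hτ => (lt_of_le_of_lt (le_trans (hXleY τ) (hsup τ hτ)) (lt_top_iff_ne_top.mpr hM)).ne
  -- real-valued energies
  set XR : ℝ → ℝ := fun τ => (Xg τ ^ 2).toReal with hXR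
  set YR : ℝ → ℝ := fun τ => (Yg τ ^ 2).toReal with hYR
  have hy_summ : ∀ τ ∈ Set.Icc T₀ T, Summable (y τ) := by
    intro τ hτ
    have h1 : (∑' k, ENNReal.ofReal (y τ k)) ≠ ⊤ := by rw [← hYsq]; exact hYfin τ hτ
    have := ENNReal.summable_toReal h1
    refine this.congr fun k => ?_
    rw [ENNReal.toReal_ofReal (rdens_nonneg _ _ _ _ _ _ _)]
  have hr_summ : ∀ τ ∈ Set.Icc T₀ T, Summable (r τ) := by
    intro τ hτ
    have h1 : (∑' k, ENNReal.ofReal (r τ k)) ≠ ⊤ := by rw [← hXsq]; exact hXfin τ hτ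
    have := ENNReal.summable_toReal h1
    refine this.congr fun k => ?_
    rw [ENNReal.toReal_ofReal (rdens_nonneg _ _ _ _ _ _ _)]
  have hXR_eq : ∀ τ ∈ Set.Icc T₀ T, XR τ = ∑' k, r τ k := by
    intro τ hτ
    rw [hXR]
    simp only
    rw [hXsq, ENNReal.tsum_toReal_eq (fun k => ENNReal.ofReal_ne_top)]
    exact tsum_congr fun k => ENNReal.toReal_ofReal (rdens_nonneg _ _ _ _ _ _ _)
  have hYR_eq : ∀ τ ∈ Set.Icc T₀ T, YR τ = ∑' k, y τ k := by
    intro τ hτ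
    rw [hYR]
    simp only
    rw [hYsq, ENNReal.tsum_toReal_eq (fun k => ENNReal.ofReal_ne_top)]
    exact tsum_congr fun k => ENNReal.toReal_ofReal (rdens_nonneg _ _ _ _ _ _ _)
  have hYR_bd : ∀ τ ∈ Set.Icc T₀ T, YR τ ≤ M.toReal := by
    intro τ hτ
    exact ENNReal.toReal_mono hM (hsup τ hτ)
  -- continuity of u
  have hcu : ∀ k : ℤ × ℤ, k ≠ 0 → ContinuousOn (fun τ => u τ k) (Set.Icc T₀ T) :=
    fun k hk τ hτ => (hderiv τ hτ k hk).continuousWithinAt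
  -- nonlinear sum bound
  have hNL : ∀ τ ∈ Set.Icc T₀ t₂,
      2 * (∑' k, ENNReal.ofReal (nldens s σ α β ν W u τ k)) ≤
        ENNReal.ofReal (ν ^ 2 - 2*β) * Yg τ ^ 2 := by
    intro τ hτ
    have hτ' : τ ∈ Set.Icc T₀ T := ⟨hτ.1, le_trans hτ.2 ht₂.2⟩
    have hwφ : ν * W τ ≤ α + β * τ := by linarith [hW τ hτ']
    have h1 : (∑' k, ENNReal.ofReal (nldens s σ α β ν W u τ k)) ≤
        c * Xg τ * Yg τ ^ 2 := by
      have := hcb (α + β * τ) (ν * W τ) hwφ (u τ)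
      refine le_trans (le_of_eq (tsum_congr fun k => ?_)) this
      by_cases hk : k = 0
      · simp [hk, nldens]
      · simp only [if_neg hk, nldens]
    calc 2 * (∑' k, ENNReal.ofReal (nldens s σ α β ν W u τ k))
        ≤ 2 * (c * Xg τ * Yg τ ^ 2) := by gcongr
    _ = (2 * c * Xg τ) * Yg τ ^ 2 := by ring
    _ ≤ ENNReal.ofReal (ν ^ 2 - 2*β) * Yg τ ^ 2 :=
        mul_le_mul_of_nonneg_right (hsmall τ hτ) zero_le
  have hNLfin : ∀ τ ∈ Set.Icc T₀ t₂,
      (∑' k, ENNReal.ofReal (nldens s σ α β ν W u τ k)) ≠ ⊤ := by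
    intro τ hτ
    have hτ' : τ ∈ Set.Icc T₀ T := ⟨hτ.1, le_trans hτ.2 ht₂.2⟩
    have h2 := hNL τ hτ
    intro hcon
    rw [hcon] at h2
    simp only [ENNReal.mul_top (two_ne_zero)] at h2
    exact absurd (eq_top_iff.mpr (le_trans h2 le_rfl))
      (ENNReal.mul_ne_top ENNReal.ofReal_ne_top (hYfin τ hτ'))
  -- derivative choice
  have hmode : ∀ τ ∈ Set.Icc T₀ T, ∀ k : ℤ × ℤ, ∃ D : ℝ,
      HasDerivWithinAt (fun τ' => r τ' k) D (Set.Icc T₀ T) τ ∧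
      D ≤ (2*β - ν^2) * y τ k + 2 * nldens s σ α β ν W u τ k := by
    intro τ hτ k
    obtain ⟨D, hD1, hD2⟩ := mode_deriv s σ ν α β T₀ T W u hs0 hβ.le (by nlinarith)
      hderiv τ hτ k
    exact ⟨D, hD1, hD2⟩
  classical
  set Dfun : ℝ → ℤ × ℤ → ℝ := fun τ k =>
    if h : τ ∈ Set.Icc T₀ T then (hmode τ h k).choose else 0 with hDfun
  have hD1 : ∀ τ (hτ : τ ∈ Set.Icc T₀ T) (k : ℤ × ℤ),
      HasDerivWithinAt (fun τ' => r τ' k) (Dfun τ k) (Set.Icc T₀ T) τ := by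
    intro τ hτ k
    rw [hDfun]
    simp only [dif_pos hτ]
    exact (hmode τ hτ k).choose_spec.1
  have hD2 : ∀ τ (hτ : τ ∈ Set.Icc T₀ T) (k : ℤ × ℤ),
      Dfun τ k ≤ (2*β - ν^2) * y τ k + 2 * nldens s σ α β ν W u τ k := by
    intro τ hτ k
    rw [hDfun]
    simp only [dif_pos hτ]
    exact (hmode τ hτ k).choose_spec.2
  -- enumeration of the lattice
  set e : ℕ ≃ ℤ × ℤ := (Denumerable.eqv (ℤ × ℤ)).symm with he
  set F : ℕ → Finset (ℤ × ℤ) := fun n => (Finset.range n).image e with hF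
  have hsum_image : ∀ (g : ℤ × ℤ → ℝ) (n : ℕ), ∑ k ∈ F n, g k = ∑ i ∈ Finset.range n, g (e i) := by
    intro g n
    rw [hF]
    exact Finset.sum_image (fun x _ z _ h => e.injective h)
  have hpartial : ∀ (g : ℤ × ℤ → ℝ), Summable g →
      Filter.Tendsto (fun n => ∑ k ∈ F n, g k) Filter.atTop (nhds (∑' k, g k)) := by
    intro g hg
    have hge : Summable (fun i : ℕ => g (e i)) := e.summable_iff.mpr hg
    have := hge.hasSum.tendsto_sum_nat
    rw [e.tsum_eq g] at this
    refine this.congr fun n => ?_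
    rw [hsum_image]
  -- integrability of the majorant pieces
  have hIccsub : Set.Icc T₀ t₂ ⊆ Set.Icc T₀ T := Set.Icc_subset_Icc le_rfl ht₂.2
  have hYRmeas : AEMeasurable YR (volume.restrict (Set.Icc T₀ t₂)) := by
    have h1 : ∀ k : ℤ × ℤ, AEMeasurable (fun τ => ENNReal.ofReal (y τ k))
        (volume.restrict (Set.Icc T₀ t₂)) := by
      intro k
      have hco : ContinuousOn (fun τ => y τ k) (Set.Icc T₀ t₂) :=
        (rdens_contOn s ((σ+1)*s) α β T₀ T u k (fun hk => hcu k hk)).mono hIccsub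
      exact (ENNReal.continuous_ofReal.comp_continuousOn hco).aemeasurable measurableSet_Icc
    have h2 : AEMeasurable (fun τ => ∑' k, ENNReal.ofReal (y τ k))
        (volume.restrict (Set.Icc T₀ t₂)) := AEMeasurable.ennreal_tsum h1
    have h3 := h2.ennreal_toReal
    apply h3.congr
    apply (ae_restrict_iff' measurableSet_Icc).mpr
    apply Filter.Eventually.of_forall
    intro τ hτ
    rw [hYR]
    simp only
    rw [hYsq]
  have hYRint : IntegrableOn YR (Set.Icc T₀ t₂) volume := by
    apply Integrable.mono' (integrable_const M.toReal) hYRmeas.aestronglyMeasurable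
    apply (ae_restrict_iff' measurableSet_Icc).mpr
    apply Filter.Eventually.of_forall
    intro τ hτ
    rw [Real.norm_eq_abs, abs_of_nonneg ENNReal.toReal_nonneg]
    exact hYR_bd τ (hIccsub hτ)
  have hyFcont : ∀ n, ContinuousOn (fun τ => ∑ k ∈ F n, y τ k) (Set.Icc T₀ T) := by
    intro n
    apply continuousOn_finset_sum
    intro k _
    exact rdens_contOn s ((σ+1)*s) α β T₀ T u k (fun hk => hcu k hk)
  have hyFint : ∀ n, IntegrableOn (fun τ => ∑ k ∈ F n, y τ k) (Set.Icc T₀ t₂) volume :=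
    fun n => ((hyFcont n).mono hIccsub).integrableOn_Icc
  -- the key FTC estimate
  have KEY : ∀ n : ℕ, (∑ k ∈ F n, r t₂ k) - (∑ k ∈ F n, r T₀ k)
      ≤ ∫ τ in T₀..t₂, ((ν^2 - 2*β) * (YR τ - ∑ k ∈ F n, y τ k)) := by
    intro n
    apply intervalIntegral.sub_le_integral_of_hasDeriv_right_of_le hlt.le
    · -- continuity
      apply (continuousOn_finset_sum _ fun k _ =>
        rdens_contOn s (σ*s) α β T₀ T u k (fun hk => hcu k hk)).mono hIccsub
    · -- derivative
      intro x hx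
      have hxT : x ∈ Set.Icc T₀ T := ⟨hx.1.le, le_trans hx.2.le ht₂.2⟩
      have hsum := HasDerivWithinAt.fun_sum (fun k (_ : k ∈ F n) => hD1 x hxT k)
      have hmem : Set.Icc T₀ T ∈ nhdsWithin x (Set.Ioi x) := by
        apply Filter.mem_of_superset
          (Ioc_mem_nhdsGT_of_mem ⟨le_refl x, lt_of_lt_of_le hx.2 ht₂.2⟩)
        intro z hz
        exact ⟨le_trans hx.1.le hz.1.le, hz.2⟩
      exact (hsum.mono_of_mem_nhdsWithin hmem : HasDerivWithinAt _ _ (Set.Ioi x) x)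
    · -- integrability of the majorant
      apply Integrable.const_mul
      exact hYRint.sub (hyFint n)
    · -- derivative bound
      intro x hx
      have hxT : x ∈ Set.Icc T₀ T := ⟨hx.1.le, le_trans hx.2.le ht₂.2⟩
      have hxt₂ : x ∈ Set.Icc T₀ t₂ := ⟨hx.1.le, hx.2.le⟩
      calc ∑ k ∈ F n, Dfun x k
          ≤ ∑ k ∈ F n, ((2*β - ν^2) * y x k + 2 * nldens s σ α β ν W u x k) :=
            Finset.sum_le_sum fun k _ => hD2 x hxT k
      _ = (2*β - ν^2) * (∑ k ∈ F n, y x k) + 2 * ∑ k ∈ F n, nldens s σ α β ν W u x k := by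
            rw [Finset.sum_add_distrib, Finset.mul_sum, Finset.mul_sum]
      _ ≤ (2*β - ν^2) * (∑ k ∈ F n, y x k) + (ν^2 - 2*β) * YR x := by
            apply add_le_add_right
            -- 2 * Σ_F nldens ≤ (ν²-2β) * YR
            have hfin := hNLfin x hxt₂
            have h1 : (∑ k ∈ F n, nldens s σ α β ν W u x k) ≤
                (∑' k, ENNReal.ofReal (nldens s σ α β ν W u x k)).toReal := by
              have he1 : ENNReal.ofReal (∑ k ∈ F n, nldens s σ α β ν W u x k) ≤
                  ∑' k, ENNReal.ofReal (nldens s σ α β ν W u x k) := by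
                rw [ENNReal.ofReal_sum_of_nonneg (fun k _ => nldens_nonneg _ _ _ _ _ _ _ _ _)]
                exact ENNReal.sum_le_tsum (F n)
              have := ENNReal.toReal_mono hfin he1
              rwa [ENNReal.toReal_ofReal (Finset.sum_nonneg
                (fun k _ => nldens_nonneg _ _ _ _ _ _ _ _ _))] at this
            have h2 : (2:ℝ) * (∑' k, ENNReal.ofReal (nldens s σ α β ν W u x k)).toReal ≤
                (ν^2 - 2*β) * YR x := by
              have h3 := ENNReal.toReal_mono
                (ENNReal.mul_ne_top ENNReal.ofReal_ne_top (hYfin x hxT)) (hNL x hxt₂)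
              rw [ENNReal.toReal_mul, ENNReal.toReal_mul, ENNReal.toReal_ofReal hpos.le,
                ENNReal.toReal_ofNat] at h3
              exact h3
            linarith
      _ = (ν^2 - 2*β) * (YR x - ∑ k ∈ F n, y x k) := by ring
  -- pass to the limit
  have hT₀mem : T₀ ∈ Set.Icc T₀ T := ⟨le_rfl, hT⟩
  have hlim_left : Filter.Tendsto
      (fun n => (∑ k ∈ F n, r t₂ k) - (∑ k ∈ F n, r T₀ k)) Filter.atTop
      (nhds (XR t₂ - XR T₀)) := by
    have h1 := hpartial (r t₂) (hr_summ t₂ ht₂)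
    have h2 := hpartial (r T₀) (hr_summ T₀ hT₀mem)
    rw [← hXR_eq t₂ ht₂] at h1
    rw [← hXR_eq T₀ hT₀mem] at h2
    exact h1.sub h2
  have hlim_right : Filter.Tendsto
      (fun n => ∫ τ in T₀..t₂, ((ν^2 - 2*β) * (YR τ - ∑ k ∈ F n, y τ k)))
      Filter.atTop (nhds 0) := by
    have heq2 : ∀ n, (∫ τ in T₀..t₂, ((ν^2 - 2*β) * (YR τ - ∑ k ∈ F n, y τ k)))
        = (ν^2 - 2*β) * ((∫ τ in T₀..t₂, YR τ) - ∫ τ in T₀..t₂, (∑ k ∈ F n, y τ k)) := by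
      intro n
      rw [intervalIntegral.integral_const_mul, intervalIntegral.integral_sub]
      · exact (hYRint.mono_set (Set.uIcc_of_le hlt.le ▸ subset_rfl)).intervalIntegrable
      · exact ((hyFint n).mono_set (Set.uIcc_of_le hlt.le ▸ subset_rfl)).intervalIntegrable
    simp_rw [heq2]
    have hconv : Filter.Tendsto (fun n => ∫ τ in T₀..t₂, (∑ k ∈ F n, y τ k))
        Filter.atTop (nhds (∫ τ in T₀..t₂, YR τ)) := by
      simp_rw [intervalIntegral.integral_of_le hlt.le]
      apply MeasureTheory.tendsto_integral_of_dominated_convergence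
        (fun _ => M.toReal)
      · intro n
        have := ((hyFcont n).mono (Set.Ioc_subset_Icc_self.trans hIccsub))
        exact this.aestronglyMeasurable measurableSet_Ioc
      · exact integrable_const _
      · intro n
        apply (ae_restrict_iff' measurableSet_Ioc).mpr
        apply Filter.Eventually.of_forall
        intro τ hτ
        have hτ' : τ ∈ Set.Icc T₀ T := hIccsub (Set.Ioc_subset_Icc_self hτ)
        rw [Real.norm_eq_abs, abs_of_nonneg (Finset.sum_nonneg
          (fun k _ => rdens_nonneg _ _ _ _ _ _ _))]
        calc (∑ k ∈ F n, y τ k) ≤ ∑' k, y τ k :=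
              Summable.sum_le_tsum (F n) (fun k _ => rdens_nonneg _ _ _ _ _ _ _) (hy_summ τ hτ')
        _ = YR τ := (hYR_eq τ hτ').symm
        _ ≤ M.toReal := hYR_bd τ hτ'
      · apply (ae_restrict_iff' measurableSet_Ioc).mpr
        apply Filter.Eventually.of_forall
        intro τ hτ
        have hτ' : τ ∈ Set.Icc T₀ T := hIccsub (Set.Ioc_subset_Icc_self hτ)
        rw [hYR_eq τ hτ']
        exact hpartial (y τ) (hy_summ τ hτ')
    have := (Filter.Tendsto.sub (tendsto_const_nhds
      (x := ∫ τ in T₀..t₂, YR τ)) hconv).const_mul (ν^2 - 2*β)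
    simpa using this
  have hfinal : XR t₂ - XR T₀ ≤ 0 :=
    le_of_tendsto_of_tendsto' hlim_left hlim_right KEY
  have hsq : Xg t₂ ^ 2 ≤ Xg T₀ ^ 2 := by
    have h2 : XR t₂ ≤ XR T₀ := by linarith
    exact (ENNReal.toReal_le_toReal (hXfin t₂ ht₂) (hXfin T₀ hT₀mem)).mp h2
  calc Xg t₂ = (Xg t₂ ^ 2) ^ (1/2:ℝ) := (half_sq _).symm
  _ ≤ (Xg T₀ ^ 2) ^ (1/2:ℝ) := ENNReal.rpow_le_rpow hsq (by norm_num)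
  _ = Xg T₀ := half_sq _


/-! ### The main theorem -/

/-- **Energy estimate for the transformed SQG equation.**
For `s ∈ (1/2,1]`, `σ ∈ (1/s,2)` there is `C ≥ 1` (depending only on `s, σ`) such that: for
`ν > 0`, `α > 0`, `0 < β < ν²/2`, `φ(t) = α + βt`, `T₀ ≤ T`, a continuous `W` with
`φ(t) − νW(t) ≥ 0` on `[T₀,T]`, and `u` with vanishing zero mode, differentiable Fourier
coefficients solving `d/dt u(t)(k) = −(ν²/2)|k|^{2s}u(t)(k) − B_{νW(t)}(u(t),u(t))(k)`,
continuous Gevrey norm `t ↦ ‖u(t)‖_{σs,φ(t)}` and `sup_{[T₀,T]}‖u(t)‖_{(σ+1)s,φ(t)} < ∞`: if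
`C‖u(T₀)‖_{σs,φ(T₀)} ≤ ν²/2 − β` then `‖u(t)‖_{σs,φ(t)} ≤ ‖u(T₀)‖_{σs,φ(T₀)}` on `[T₀,T]`. -/
theorem transformed_SQG_energy_estimate
    (s σ : ℝ) (hs : s ∈ Set.Ioc (1/2 : ℝ) 1) (hσ : σ ∈ Set.Ioo (1/s) 2) :
    ∃ C : ℝ, 1 ≤ C ∧
      ∀ (ν α β : ℝ), 0 < ν → 0 < α → 0 < β → β < ν ^ 2 / 2 →
      ∀ (T₀ T : ℝ), T₀ ≤ T →
      ∀ W : ℝ → ℝ, ContinuousOn W (Set.Icc T₀ T) →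
        (∀ t ∈ Set.Icc T₀ T, 0 ≤ (α + β * t) - ν * W t) →
      ∀ u : ℝ → ℤ × ℤ → ℂ,
        (∀ t ∈ Set.Icc T₀ T, u t 0 = 0) →
        (∀ t ∈ Set.Icc T₀ T, ∀ k : ℤ × ℤ, k ≠ 0 →
          HasDerivWithinAt (fun τ => u τ k)
            (((-(ν ^ 2 / 2) * znorm k ^ (2 * s) : ℝ) : ℂ) * u t k
              - Bcoef s (ν * W t) (u t) (u t) k)
            (Set.Icc T₀ T) t) →
        ContinuousOn (fun t => gnorm s (σ * s) (α + β * t) (u t)) (Set.Icc T₀ T) →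
        (⨆ t ∈ Set.Icc T₀ T, gnorm s ((σ + 1) * s) (α + β * t) (u t)) < ⊤ →
        ENNReal.ofReal C * gnorm s (σ * s) (α + β * T₀) (u T₀) ≤
          ENNReal.ofReal (ν ^ 2 / 2 - β) →
        ∀ t ∈ Set.Icc T₀ T,
          gnorm s (σ * s) (α + β * t) (u t) ≤ gnorm s (σ * s) (α + β * T₀) (u T₀) := by
  have hs0 : 0 < s := lt_trans (by norm_num) hs.1
  have hσs : 1 < σ * s := by
    have h := hσ.1
    rw [div_lt_iff₀ hs0] at h
    linarith
  have hσ1 : 1 ≤ σ := by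
    have h1 : (1:ℝ) ≤ 1/s := by
      rw [le_div_iff₀ hs0]
      nlinarith [hs.2]
    linarith [hσ.1]
  obtain ⟨c, hc, hcb⟩ := NL_bound s σ hs.1.le hs.2 hσs hσ1
  refine ⟨max 1 (2*c).toReal, le_max_left _ _, ?_⟩
  intro ν α β hν hα hβ hβν T₀ T hT W hWcont hW u hu0 hderiv hgcont hsupfin hsmall0 t ht
  have h2c : (2*c : ℝ≥0∞) ≠ ⊤ := ENNReal.mul_ne_top (by norm_num) hc
  have hofc : (2*c : ℝ≥0∞) ≤ ENNReal.ofReal (max 1 (2*c).toReal) := by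
    calc (2*c : ℝ≥0∞) = ENNReal.ofReal ((2*c).toReal) := (ENNReal.ofReal_toReal h2c).symm
    _ ≤ _ := ENNReal.ofReal_le_ofReal (le_max_right _ _)
  have hpos : (0:ℝ) < ν ^ 2 - 2*β := by nlinarith
  set Xg : ℝ → ℝ≥0∞ := fun τ => gnorm s (σ*s) (α + β * τ) (u τ) with hXg
  -- supremum bound
  set N : ℝ≥0∞ := ⨆ t ∈ Set.Icc T₀ T, gnorm s ((σ+1)*s) (α + β * t) (u t) with hNdef
  have hN : N ≠ ⊤ := hsupfin.ne
  have hM : (N^2 : ℝ≥0∞) ≠ ⊤ := ENNReal.pow_ne_top hN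
  have hsup : ∀ τ ∈ Set.Icc T₀ T, gnorm s ((σ+1)*s) (α + β * τ) (u τ) ^ 2 ≤ N^2 := by
    intro τ hτ
    have h1 : gnorm s ((σ+1)*s) (α + β * τ) (u τ) ≤ N := by
      rw [hNdef]
      exact le_iSup₂ (f := fun t _ => gnorm s ((σ+1)*s) (α + β * t) (u t)) τ hτ
    exact pow_le_pow_left' h1 2
  -- decay under smallness
  have hdecay : ∀ t₂ ∈ Set.Icc T₀ T,
      (∀ τ ∈ Set.Icc T₀ t₂, 2 * c * Xg τ ≤ ENNReal.ofReal (ν ^ 2 - 2*β)) →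
      Xg t₂ ≤ Xg T₀ := by
    intro t₂ ht₂ hsm
    exact decay_step s σ hs hσ c hc hcb ν α β T₀ T hν hβ hβν hT W hW u hderiv
      (N^2) hM hsup t₂ ht₂ hsm
  -- initial smallness
  have hX0 : 2 * c * Xg T₀ ≤ ENNReal.ofReal (ν^2/2 - β) :=
    le_trans (mul_le_mul_left hofc (Xg T₀)) hsmall0
  have hhalf : ENNReal.ofReal (ν^2/2 - β) ≤ ENNReal.ofReal (ν^2 - 2*β) :=
    ENNReal.ofReal_le_ofReal (by linarith)
  have hstrict : ENNReal.ofReal (ν^2/2 - β) < ENNReal.ofReal (ν^2 - 2*β) := by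
    rw [ENNReal.ofReal_lt_ofReal_iff hpos]
    linarith
  -- the invariant set
  set S : Set ℝ := {t | ∀ τ ∈ Set.Icc T₀ (min t T), Xg τ ≤ Xg T₀} with hS
  suffices hsub : Set.Icc T₀ T ⊆ S by
    have h1 := hsub ht
    have h2 := h1 t ⟨ht.1, by rw [min_eq_left ht.2]⟩
    exact h2
  apply IsClosed.Icc_subset_of_forall_exists_gt
  · -- closedness of S ∩ Icc T₀ T
    apply IsSeqClosed.isClosed
    intro f t0 hf hft
    have ht0Icc : t0 ∈ Set.Icc T₀ T :=
      isClosed_Icc.mem_of_tendsto hft (Filter.Eventually.of_forall fun n => (hf n).2)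
    refine ⟨?_, ht0Icc⟩
    intro τ hτ
    have hτT : τ ≤ T := le_trans hτ.2 (min_le_right _ _)
    have hτt0 : τ ≤ t0 := le_trans hτ.2 (min_le_left _ _)
    have hτIcc : τ ∈ Set.Icc T₀ T := ⟨hτ.1, hτT⟩
    rcases eq_or_lt_of_le hτt0 with heq | hlt
    · -- τ = t0 : use continuity or a term of the sequence beyond t0
      subst heq
      by_cases hex : ∃ n, τ ≤ f n
      · obtain ⟨n, hn⟩ := hex
        exact (hf n).1 τ ⟨hτ.1, le_min hn hτT⟩
      · push_neg at hex
        have hXfn : ∀ n, Xg (f n) ≤ Xg T₀ := by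
          intro n
          exact (hf n).1 (f n) ⟨(hf n).2.1, le_min le_rfl (hf n).2.2⟩
        have htend : Filter.Tendsto (fun n => Xg (f n)) Filter.atTop (nhds (Xg τ)) := by
          have hcw := hgcont τ hτIcc
          exact hcw.tendsto.comp (tendsto_nhdsWithin_iff.mpr
            ⟨hft, Filter.Eventually.of_forall fun n => (hf n).2⟩)
        exact le_of_tendsto htend (Filter.Eventually.of_forall hXfn)
    · -- τ < t0 : some f n exceeds τ
      have : ∀ᶠ n in Filter.atTop, τ < f n := hft.eventually (eventually_gt_nhds hlt)
      obtain ⟨n, hn⟩ := this.exists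
      exact (hf n).1 τ ⟨hτ.1, le_min hn.le hτT⟩
  · -- T₀ ∈ S
    intro τ hτ
    have h1 : τ = T₀ := le_antisymm (le_trans hτ.2 (min_le_left _ _)) hτ.1
    rw [h1]
  · -- the step
    intro x hx yy hyy
    obtain ⟨hxS, hxI⟩ := hx
    have hxIcc : x ∈ Set.Icc T₀ T := ⟨hxI.1, hxI.2.le⟩
    have hsmall_x : ∀ τ ∈ Set.Icc T₀ x, 2 * c * Xg τ ≤ ENNReal.ofReal (ν^2/2 - β) := by
      intro τ hτ
      have h1 : Xg τ ≤ Xg T₀ := hxS τ ⟨hτ.1, le_min hτ.2 (le_trans hτ.2 hxI.2.le)⟩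
      calc 2 * c * Xg τ ≤ 2 * c * Xg T₀ := mul_le_mul_right h1 _
      _ ≤ _ := hX0
    -- continuity gives a right neighborhood where smallness (with the weaker bound) holds
    have hcw : Filter.Tendsto (fun τ => 2 * c * Xg τ) (nhdsWithin x (Set.Icc T₀ T))
        (nhds (2 * c * Xg x)) :=
      ((ENNReal.continuous_const_mul h2c).continuousAt).tendsto.comp
        (hgcont x hxIcc).tendsto
    have hval : 2 * c * Xg x < ENNReal.ofReal (ν^2 - 2*β) :=
      lt_of_le_of_lt (hsmall_x x ⟨hxI.1, le_rfl⟩) hstrict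
    have hevt : {τ | 2 * c * Xg τ < ENNReal.ofReal (ν^2 - 2*β)} ∈
        nhdsWithin x (Set.Icc T₀ T) := hcw (Iio_mem_nhds hval)
    rw [mem_nhdsWithin] at hevt
    obtain ⟨U, hUopen, hxU, hUsub⟩ := hevt
    obtain ⟨ε, hε, hball⟩ := Metric.isOpen_iff.mp hUopen x hxU
    set z : ℝ := min yy (min T (x + ε/2)) with hz
    have hxz : x < z := by
      apply lt_min hyy
      exact lt_min hxI.2 (by linarith)
    have hzT : z ≤ T := le_trans (min_le_right _ _) (min_le_left _ _)
    have hzball : ∀ τ, x < τ → τ ≤ z → τ ∈ U := by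
      intro τ h1 h2
      apply hball
      rw [Metric.mem_ball, Real.dist_eq, abs_of_pos (by linarith)]
      have : τ ≤ x + ε/2 := le_trans h2 (le_trans (min_le_right _ _) (min_le_right _ _))
      linarith
    refine ⟨z, ?_, hxz, min_le_left _ _⟩
    -- z ∈ S
    intro τ hτ
    have hτz : τ ≤ z := le_trans hτ.2 (min_le_left _ _)
    have hτIcc : τ ∈ Set.Icc T₀ T := ⟨hτ.1, le_trans hτz hzT⟩
    apply hdecay τ hτIcc
    intro ρ hρ
    have hρIcc : ρ ∈ Set.Icc T₀ T := ⟨hρ.1, le_trans hρ.2 hτIcc.2⟩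
    by_cases hρx : ρ ≤ x
    · exact le_trans (hsmall_x ρ ⟨hρ.1, hρx⟩) hhalf
    · push_neg at hρx
      have hρU : ρ ∈ U := hzball ρ hρx (le_trans hρ.2 hτz)
      exact (hUsub ⟨hρU, hρIcc⟩).le

end
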